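/- Beth definability from interpolation for PDL: Assume PDL has the Craig interpolation property. Then PDL has the Beth definability property: for any formula φ(p) implicitly defining p (i.e., φ(p₀), φ(p₁) ⊨ p₀ ↔ p₁ for fresh atoms p₀, p₁ not in the vocabulary of φ), there exists a formula ψ with vocabulary contained in voc(φ)∖{p} such that φ(p) ⊨ p ↔ ψ. -/
import Mathlib


mutual
inductive Formula : Type
  | bot : Formula
  | atom : ℕ → Formula
  | and : Formula → Formula → Formula
  | neg : Formula → Formula
  | box : Program → Formula → Formula
inductive Program : Type
  | atom : ℕ → Program
  | test : Formula → Program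
  | union : Program → Program → Program
  | comp : Program → Program → Program
  | star : Program → Program
end

structure KripkeModel (W : Type) : Type where
  rel : ℕ → W → W → Prop
  val : W → ℕ → Prop

mutual
def evaluate {W : Type} (M : KripkeModel W) : W → Formula → Prop
  | _, .bot => False
  | w, .atom p => M.val w p
  | w, .and φ ψ => evaluate M w φ ∧ evaluate M w ψ
  | w, .neg φ => ¬ evaluate M w φ
  | w, .box α φ => ∀ v, relate M α w v → evaluate M v φ
def relate {W : Type} (M : KripkeModel W) : Program → W → W → Prop
  | .atom a, w, v => M.rel a w v
  | .test τ, w, v => w = v ∧ evaluate M w τ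
  | .union α β, w, v => relate M α w v ∨ relate M β w v
  | .comp α β, w, v => ∃ u, relate M α w u ∧ relate M β u v
  | .star α, w, v => Relation.ReflTransGen (fun x y => relate M α x y) w v
end

/-- Relation interpreting a list of programs: composition, identity for `[]`. -/
def relateSeq {W : Type} (M : KripkeModel W) : List Program → W → W → Prop
  | [], v, w => v = w
  | α :: δ, v, w => ∃ u, relate M α v u ∧ relateSeq M δ u w

/-- Implication, defined from ¬ and ∧. -/
def Formula.imp (φ ψ : Formula) : Formula := .neg (.and φ (.neg ψ))

/-- Disjunction, defined from ¬ and ∧. -/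
def Formula.disj (φ ψ : Formula) : Formula := .neg (.and (.neg φ) (.neg ψ))

def semImplies (φ ψ : Formula) : Prop :=
  ∀ (W : Type) (M : KripkeModel W) (w : W), evaluate M w φ → evaluate M w ψ

def semEquiv (φ ψ : Formula) : Prop :=
  ∀ (W : Type) (M : KripkeModel W) (w : W), evaluate M w φ ↔ evaluate M w ψ

def valid (φ : Formula) : Prop :=
  ∀ (W : Type) (M : KripkeModel W) (w : W), evaluate M w φ

mutual
/-- Uniform substitution on formulas. -/
def substF (σ : ℕ → Formula) : Formula → Formula
  | .bot => .bot
  | .atom p => σ p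
  | .and φ ψ => .and (substF σ φ) (substF σ ψ)
  | .neg φ => .neg (substF σ φ)
  | .box α φ => .box (substP σ α) (substF σ φ)
/-- Uniform substitution on programs. -/
def substP (σ : ℕ → Formula) : Program → Program
  | .atom a => .atom a
  | .test τ => .test (substF σ τ)
  | .union α β => .union (substP σ α) (substP σ β)
  | .comp α β => .comp (substP σ α) (substP σ β)
  | .star α => .star (substP σ α)
end

/-- The substitution ρ/x mapping x to ρ and all other atoms to themselves. -/
def substOne (x : ℕ) (ρ : Formula) : ℕ → Formula := fun p => if p = x then ρ else .atom p

mutual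
/-- Occurrence of an atomic proposition in a formula. -/
def occursF (x : ℕ) : Formula → Prop
  | .bot => False
  | .atom p => p = x
  | .and φ ψ => occursF x φ ∨ occursF x ψ
  | .neg φ => occursF x φ
  | .box α φ => occursP x α ∨ occursF x φ
/-- Occurrence of an atomic proposition in a program (including inside tests). -/
def occursP (x : ℕ) : Program → Prop
  | .atom _ => False
  | .test τ => occursF x τ
  | .union α β => occursP x α ∨ occursP x β
  | .comp α β => occursP x α ∨ occursP x β
  | .star α => occursP x α
end

mutual
/-- Vocabulary of a formula: atomic propositions (inl) and atomic programs (inr). -/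
def vocF : Formula → Set (ℕ ⊕ ℕ)
  | .bot => ∅
  | .atom p => {Sum.inl p}
  | .and φ ψ => vocF φ ∪ vocF ψ
  | .neg φ => vocF φ
  | .box α φ => vocP α ∪ vocF φ
def vocP : Program → Set (ℕ ⊕ ℕ)
  | .atom a => {Sum.inr a}
  | .test τ => vocF τ
  | .union α β => vocP α ∪ vocP β
  | .comp α β => vocP α ∪ vocP β
  | .star α => vocP α
end

/-- Shallow tests of a program. -/
def TestsOf : Program → Set Formula
  | .atom _ => ∅
  | .test τ => {τ}
  | .union α β => TestsOf α ∪ TestsOf β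
  | .comp α β => TestsOf α ∪ TestsOf β
  | .star α => TestsOf α

/-- Shallow subprograms of a program. -/
def ProgsOf : Program → Set Program
  | .atom a => {.atom a}
  | .test τ => {.test τ}
  | .union α β => {.union α β} ∪ ProgsOf α ∪ ProgsOf β
  | .comp α β => {.comp α β} ∪ ProgsOf α ∪ ProgsOf β
  | .star α => {.star α} ∪ ProgsOf α

/-- Iterated boxes: □(δ̄, φ) = [δ₁]…[δₙ]φ. -/
def boxes : List Program → Formula → Formula
  | [], φ => φ
  | α :: δ, φ => .box α (boxes δ φ)

/-- Test profiles of a program: subsets of its shallow tests. -/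
def TP (α : Program) : Set (Set Formula) := {ℓ | ℓ ⊆ TestsOf α}

/-- The sets of program lists P^ℓ. -/
def Pfun (ℓ : Set Formula) : Program → Set (List Program)
  | .atom a => {[.atom a]}
  | .test τ => {l | l = [] ∧ τ ∈ ℓ}
  | .union α β => Pfun ℓ α ∪ Pfun ℓ β
  | .comp α β => {l | ∃ δ ∈ Pfun ℓ α, δ ≠ [] ∧ l = δ ++ [β]} ∪ {l | l ∈ Pfun ℓ β ∧ [] ∈ Pfun ℓ α}
  | .star α => {[]} ∪ {l | ∃ δ ∈ Pfun ℓ α, δ ≠ [] ∧ l = δ ++ [.star α]}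

/-- F^ℓ(α): negations of the failed tests. -/
def Ffun (ℓ : Set Formula) (α : Program) : Set Formula :=
  {φ | ∃ τ, τ ∈ TestsOf α ∧ τ ∉ ℓ ∧ φ = Formula.neg τ}

/-- X^ℓ_{α,ψ}. -/
def Xset (ℓ : Set Formula) (α : Program) (ψ : Formula) : Set Formula :=
  Ffun ℓ α ∪ {φ | ∃ δ ∈ Pfun ℓ α, φ = boxes δ ψ}

/-- unfold_□(α, ψ). -/
def unfoldBox (α : Program) (ψ : Formula) : Set (Set Formula) :=
  {Γ | ∃ ℓ ∈ TP α, Γ = Xset ℓ α ψ}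

/-- The function H for diamond unfolding. -/
def Hfun : Program → Set (Set Formula × List Program)
  | .atom a => {(∅, [.atom a])}
  | .test τ => {({τ}, [])}
  | .union α β => Hfun α ∪ Hfun β
  | .comp α β =>
      {p | (∃ X δ, (X, δ) ∈ Hfun α ∧ δ ≠ [] ∧ p = (X, δ ++ [β])) ∨
           (∃ X Y δ, (X, ([] : List Program)) ∈ Hfun α ∧ (Y, δ) ∈ Hfun β ∧ p = (X ∪ Y, δ))}
  | .star α =>
      insert (∅, ([] : List Program))
        {p | ∃ X δ, (X, δ) ∈ Hfun α ∧ δ ≠ [] ∧ p = (X, δ ++ [Program.star α])}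

/-- unfold_◇(α, ψ). -/
def unfoldDiamond (α : Program) (ψ : Formula) : Set (Set Formula) :=
  {Γ | ∃ p ∈ Hfun α, Γ = p.1 ∪ {Formula.neg (boxes p.2 ψ)}}

/-- Saturated sets of formulas. -/
def Saturated (Y : Set Formula) : Prop :=
  (∀ φ, Formula.neg (.neg φ) ∈ Y → φ ∈ Y) ∧
  (∀ φ ψ, Formula.and φ ψ ∈ Y → φ ∈ Y ∧ ψ ∈ Y) ∧
  (∀ φ ψ, Formula.neg (.and φ ψ) ∈ Y → Formula.neg φ ∈ Y ∨ Formula.neg ψ ∈ Y) ∧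
  (∀ α φ, Formula.box α φ ∈ Y → ∃ Δ ∈ unfoldBox α φ, Δ ⊆ Y) ∧
  (∀ α φ, Formula.neg (.box α φ) ∈ Y → ∃ Δ ∈ unfoldDiamond α φ, Δ ⊆ Y)

/-- Single negation. -/
def snegg : Formula → Formula
  | .neg φ => φ
  | φ => .neg φ

mutual
/-- Subformulas of a formula. -/
def subfF : Formula → Set Formula
  | .bot => {.bot}
  | .atom p => {.atom p}
  | .and φ ψ => {.and φ ψ} ∪ subfF φ ∪ subfF ψ
  | .neg φ => {.neg φ} ∪ subfF φ
  | .box α φ => {.box α φ} ∪ subfP α ∪ subfF φ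
/-- Formulas occurring in a program. -/
def subfP : Program → Set Formula
  | .atom _ => ∅
  | .test τ => subfF τ
  | .union α β => subfP α ∪ subfP β
  | .comp α β => subfP α ∪ subfP β
  | .star α => subfP α
end

/-- Fischer-Ladner closed sets. -/
def FLclosed (S : Set Formula) : Prop :=
  (∀ φ ∈ S, snegg φ ∈ S) ∧
  (∀ φ ∈ S, subfF φ ⊆ S) ∧
  (∀ α β φ, Formula.box (.union α β) φ ∈ S → Formula.box α φ ∈ S ∧ Formula.box β φ ∈ S) ∧
  (∀ α β φ, Formula.box (.comp α β) φ ∈ S → Formula.box α (.box β φ) ∈ S) ∧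
  (∀ α φ, Formula.box (.star α) φ ∈ S → Formula.box α (.box (.star α) φ) ∈ S)

/-- Fischer-Ladner closure: the smallest Fischer-Ladner closed superset. -/
def FL (X : Set Formula) : Set Formula := {φ | ∀ S, X ⊆ S → FLclosed S → φ ∈ S}

mutual
def lenF : Formula → ℕ
  | .bot => 1
  | .atom _ => 1
  | .and φ ψ => 1 + lenF φ + lenF ψ
  | .neg φ => 1 + lenF φ
  | .box α φ => 1 + lenP α + lenF φ
/-- Length (size) of a program. -/
def lenP : Program → ℕ
  | .atom _ => 1
  | .test τ => 1 + lenF τ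
  | .union α β => 1 + lenP α + lenP β
  | .comp α β => 1 + lenP α + lenP β
  | .star α => 1 + lenP α
end

/-- Sum of distances along a list of states (consecutive pairs). -/
noncomputable def listSum {W : Type} (d : W → W → ℕ∞) : List W → ℕ∞
  | [] => 0
  | [_] => 0
  | a :: b :: rest => d a b + listSum d (b :: rest)

open Classical in
/-- The α-distance between states. -/
noncomputable def distance {W : Type} (M : KripkeModel W) : Program → W → W → ℕ∞
  | .atom a, v, w => if M.rel a v w then 1 else ⊤
  | .test τ, v, w => if v = w ∧ evaluate M v τ then 0 else ⊤
  | .union α β, v, w => min (distance M α v w) (distance M β v w)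
  | .comp α β, v, w => ⨅ u, distance M α v u + distance M β u w
  | .star α, v, w =>
      ⨅ (l : List W) (_ : l.head? = some v ∧ l.getLast? = some w),
        listSum (fun x y => distance M α x y) l

open Classical in
/-- Distance along a list of programs. -/
noncomputable def distanceSeq {W : Type} (M : KripkeModel W) : List Program → W → W → ℕ∞
  | [], v, w => if v = w then 0 else ⊤
  | α :: δ, v, w => ⨅ u, distance M α v u + distanceSeq M δ u w

/-- The relation Q_α on a type of "states" S carrying formula membership `mem`. -/
def Qprog {S : Type} (mem : Formula → S → Prop) (R : ℕ → S → S → Prop) : Program → S → S → Prop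
  | .atom a => R a
  | .test τ => fun X Y => X = Y ∧ mem τ X
  | .union α β => fun X Y => Qprog mem R α X Y ∨ Qprog mem R β X Y
  | .comp α β => fun X Y => ∃ U, Qprog mem R α X U ∧ Qprog mem R β U Y
  | .star α => Relation.ReflTransGen (fun X Y => Qprog mem R α X Y)

/-- Q along a list of programs, with Id_W (restricted identity) for the empty list. -/
def Qseq {S : Type} (mem : Formula → S → Prop) (R : ℕ → S → S → Prop) (Wset : Set S) :
    List Program → S → S → Prop
  | [] => fun Y Z => Y = Z ∧ Y ∈ Wset
  | α :: δ => fun Y Z => ∃ U, Qprog mem R α Y U ∧ Qseq mem R Wset δ U Z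

/-- A model graph: a Kripke model whose states are locally consistent saturated sets. -/
structure ModelGraph (Wset : Set (Set Formula)) : Type where
  R : ℕ → ↥Wset → ↥Wset → Prop
  saturated : ∀ X : ↥Wset, Saturated X.val
  noBot : ∀ X : ↥Wset, Formula.bot ∉ X.val
  consistent : ∀ (X : ↥Wset) (p : ℕ),
    Formula.atom p ∈ X.val → Formula.neg (Formula.atom p) ∉ X.val
  boxCond : ∀ (X Y : ↥Wset) (a : ℕ) (φ : Formula),
    R a X Y → Formula.box (.atom a) φ ∈ X.val → φ ∈ Y.val
  diaCond : ∀ (X : ↥Wset) (α : Program) (φ : Formula),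
    Formula.neg (.box α φ) ∈ X.val →
      ∃ Y : ↥Wset, Qprog (fun τ Z => τ ∈ Z.val) R α X Y ∧ Formula.neg φ ∈ Y.val

/-- The Kripke model of a model graph; valuation: p holds at X iff p ∈ X. -/
def mgModel {Wset : Set (Set Formula)} (G : ModelGraph Wset) : KripkeModel ↥Wset :=
  ⟨G.R, fun X p => Formula.atom p ∈ X.val⟩

/-- Substituting atom q for atom p uniformly. -/
def substAtom (p q : ℕ) (φ : Formula) : Formula :=
  substF (fun r => if r = p then Formula.atom q else Formula.atom r) φ

section BethAux

/-! ### Auxiliary machinery for Beth definability -/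

mutual
/-- Propositional atoms of a formula, as a Finset. -/
def fvF : Formula → Finset ℕ
  | .bot => ∅
  | .atom p => {p}
  | .and φ ψ => fvF φ ∪ fvF ψ
  | .neg φ => fvF φ
  | .box α φ => fvP α ∪ fvF φ
/-- Propositional atoms of a program, as a Finset. -/
def fvP : Program → Finset ℕ
  | .atom _ => ∅
  | .test τ => fvF τ
  | .union α β => fvP α ∪ fvP β
  | .comp α β => fvP α ∪ fvP β
  | .star α => fvP α
end

mutual
theorem voc_fvF (q : ℕ) : ∀ χ : Formula, Sum.inl q ∈ vocF χ ↔ q ∈ fvF χ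
  | .bot => by simp [vocF, fvF]
  | .atom r => by simp [vocF, fvF]
  | .and φ ψ => by simp [vocF, fvF, voc_fvF q φ, voc_fvF q ψ]
  | .neg φ => by simp [vocF, fvF, voc_fvF q φ]
  | .box α φ => by simp [vocF, fvF, voc_fvP q α, voc_fvF q φ]
theorem voc_fvP (q : ℕ) : ∀ α : Program, Sum.inl q ∈ vocP α ↔ q ∈ fvP α
  | .atom a => by simp [vocP, fvP]
  | .test τ => by simp [vocP, fvP, voc_fvF q τ]
  | .union α β => by simp [vocP, fvP, voc_fvP q α, voc_fvP q β]
  | .comp α β => by simp [vocP, fvP, voc_fvP q α, voc_fvP q β]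
  | .star α => by simp [vocP, fvP, voc_fvP q α]
end

mutual
theorem agreeF {W : Type} (M M' : KripkeModel W) (hR : M.rel = M'.rel) :
    ∀ χ : Formula, (∀ v r, r ∈ fvF χ → (M.val v r ↔ M'.val v r)) →
      ∀ w, evaluate M w χ ↔ evaluate M' w χ
  | .bot, _, w => by simp [evaluate]
  | .atom r, h, w => by simpa [evaluate] using h w r (by simp [fvF])
  | .and φ ψ, h, w => by
      simp only [evaluate]
      exact and_congr
        (agreeF M M' hR φ (fun v r hr => h v r (by simp [fvF, hr])) w)
        (agreeF M M' hR ψ (fun v r hr => h v r (by simp [fvF, hr])) w)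
  | .neg φ, h, w => by
      simp only [evaluate]
      exact not_congr (agreeF M M' hR φ (fun v r hr => h v r (by simp [fvF, hr])) w)
  | .box α φ, h, w => by
      simp only [evaluate]
      refine forall_congr' fun v => imp_congr
        (agreeP M M' hR α (fun u r hr => h u r (by simp [fvF, hr])) w v)
        (agreeF M M' hR φ (fun u r hr => h u r (by simp [fvF, hr])) v)
theorem agreeP {W : Type} (M M' : KripkeModel W) (hR : M.rel = M'.rel) :
    ∀ α : Program, (∀ v r, r ∈ fvP α → (M.val v r ↔ M'.val v r)) →
      ∀ v w, relate M α v w ↔ relate M' α v w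
  | .atom a, _, v, w => by simp [relate, hR]
  | .test τ, h, v, w => by
      simp only [relate]
      exact and_congr Iff.rfl (agreeF M M' hR τ (fun u r hr => h u r (by simpa [fvP] using hr)) v)
  | .union α β, h, v, w => by
      simp only [relate]
      exact or_congr
        (agreeP M M' hR α (fun u r hr => h u r (by simp [fvP, hr])) v w)
        (agreeP M M' hR β (fun u r hr => h u r (by simp [fvP, hr])) v w)
  | .comp α β, h, v, w => by
      simp only [relate]
      exact exists_congr fun u => and_congr
        (agreeP M M' hR α (fun x r hr => h x r (by simp [fvP, hr])) v u)
        (agreeP M M' hR β (fun x r hr => h x r (by simp [fvP, hr])) u w)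
  | .star α, h, v, w => by
      have heq : (fun x y => relate M α x y) = (fun x y => relate M' α x y) := by
        funext x y
        exact propext (agreeP M M' hR α (fun u r hr => h u r (by simpa [fvP] using hr)) x y)
      simp only [relate, heq]
end

mutual
theorem substF_eval {W : Type} (M : KripkeModel W) (σ : ℕ → Formula) :
    ∀ (χ : Formula) (w : W),
      evaluate M w (substF σ χ) ↔
        evaluate ⟨M.rel, fun v r => evaluate M v (σ r)⟩ w χ
  | .bot, w => by simp [substF, evaluate]
  | .atom r, w => by simp [substF, evaluate]
  | .and φ ψ, w => by
      simp only [substF, evaluate]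
      exact and_congr (substF_eval M σ φ w) (substF_eval M σ ψ w)
  | .neg φ, w => by
      simp only [substF, evaluate]
      exact not_congr (substF_eval M σ φ w)
  | .box α φ, w => by
      simp only [substF, evaluate]
      exact forall_congr' fun v => imp_congr (substP_rel M σ α w v) (substF_eval M σ φ v)
theorem substP_rel {W : Type} (M : KripkeModel W) (σ : ℕ → Formula) :
    ∀ (α : Program) (v w : W),
      relate M (substP σ α) v w ↔
        relate ⟨M.rel, fun v r => evaluate M v (σ r)⟩ α v w
  | .atom a, v, w => by simp [substP, relate]
  | .test τ, v, w => by
      simp only [substP, relate]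
      exact and_congr Iff.rfl (substF_eval M σ τ v)
  | .union α β, v, w => by
      simp only [substP, relate]
      exact or_congr (substP_rel M σ α v w) (substP_rel M σ β v w)
  | .comp α β, v, w => by
      simp only [substP, relate]
      exact exists_congr fun u => and_congr (substP_rel M σ α v u) (substP_rel M σ β u w)
  | .star α, v, w => by
      have heq : (fun x y => relate M (substP σ α) x y)
          = (fun x y => relate (⟨M.rel, fun v r => evaluate M v (σ r)⟩ : KripkeModel W) α x y) := by
        funext x y
        exact propext (substP_rel M σ α x y)
      simp only [substP, relate, heq]
end

mutual
theorem voc_substF (p q : ℕ) :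
    ∀ χ : Formula,
      vocF (substF (fun r => if r = p then Formula.atom q else Formula.atom r) χ)
        ⊆ (vocF χ \ {Sum.inl p}) ∪ {Sum.inl q}
  | .bot => by simp [substF, vocF]
  | .atom r => by
      by_cases h : r = p <;> intro x hx <;> simp_all [substF, vocF]
  | .and φ ψ => by
      intro x hx
      simp only [substF, vocF, Set.mem_union] at hx
      rcases hx with hx | hx
      · have := voc_substF p q φ hx
        simp only [Set.mem_union, Set.mem_diff, vocF] at this ⊢; tauto
      · have := voc_substF p q ψ hx
        simp only [Set.mem_union, Set.mem_diff, vocF] at this ⊢; tauto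
  | .neg φ => by
      intro x hx
      simp only [substF, vocF] at hx ⊢
      exact voc_substF p q φ hx
  | .box α φ => by
      intro x hx
      simp only [substF, vocF, Set.mem_union] at hx
      rcases hx with hx | hx
      · have := voc_substP p q α hx
        simp only [Set.mem_union, Set.mem_diff, vocF] at this ⊢; tauto
      · have := voc_substF p q φ hx
        simp only [Set.mem_union, Set.mem_diff, vocF] at this ⊢; tauto
theorem voc_substP (p q : ℕ) :
    ∀ α : Program,
      vocP (substP (fun r => if r = p then Formula.atom q else Formula.atom r) α)
        ⊆ (vocP α \ {Sum.inl p}) ∪ {Sum.inl q}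
  | .atom a => by intro x hx; simp_all [substP, vocP]
  | .test τ => by
      intro x hx
      simp only [substP, vocP] at hx ⊢
      exact voc_substF p q τ hx
  | .union α β => by
      intro x hx
      simp only [substP, vocP, Set.mem_union] at hx
      rcases hx with hx | hx
      · have := voc_substP p q α hx
        simp only [Set.mem_union, Set.mem_diff, vocP] at this ⊢; tauto
      · have := voc_substP p q β hx
        simp only [Set.mem_union, Set.mem_diff, vocP] at this ⊢; tauto
  | .comp α β => by
      intro x hx
      simp only [substP, vocP, Set.mem_union] at hx
      rcases hx with hx | hx
      · have := voc_substP p q α hx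
        simp only [Set.mem_union, Set.mem_diff, vocP] at this ⊢; tauto
      · have := voc_substP p q β hx
        simp only [Set.mem_union, Set.mem_diff, vocP] at this ⊢; tauto
  | .star α => by
      intro x hx
      simp only [substP, vocP] at hx ⊢
      exact voc_substP p q α hx
end

theorem eval_imp {W : Type} (M : KripkeModel W) (w : W) (φ ψ : Formula) :
    evaluate M w (φ.imp ψ) ↔ (evaluate M w φ → evaluate M w ψ) := by
  simp only [Formula.imp, evaluate]; tauto

end BethAux

/-- Beth definability from Craig interpolation for PDL. -/
theorem beth
    (hCIP : ∀ φ ψ : Formula, valid (φ.imp ψ) →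
      ∃ θ, vocF θ ⊆ vocF φ ∩ vocF ψ ∧ valid (φ.imp θ) ∧ valid (θ.imp ψ)) :
    ∀ (φ : Formula) (p : ℕ),
      (∀ p₀ p₁ : ℕ, Sum.inl p₀ ∉ vocF φ → Sum.inl p₁ ∉ vocF φ →
        ∀ (W : Type) (M : KripkeModel W) (w : W),
          evaluate M w (substAtom p p₀ φ) → evaluate M w (substAtom p p₁ φ) →
          (evaluate M w (Formula.atom p₀) ↔ evaluate M w (Formula.atom p₁))) →
      ∃ ψ : Formula, vocF ψ ⊆ vocF φ \ {Sum.inl p} ∧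
        ∀ (W : Type) (M : KripkeModel W) (w : W),
          evaluate M w φ → (evaluate M w (Formula.atom p) ↔ evaluate M w ψ) := by
  intro φ p hImplicit
  classical
  -- choose fresh atoms
  obtain ⟨p₀, p₁, hp₀φ, hp₁φ, hp₀p, hp₁p, hp₀₁⟩ :
      ∃ p₀ p₁ : ℕ, p₀ ∉ fvF φ ∧ p₁ ∉ fvF φ ∧ p₀ ≠ p ∧ p₁ ≠ p ∧ p₀ ≠ p₁ := by
    have fresh : ∀ k, (insert p (fvF φ)).sup id + 1 + k ∉ insert p (fvF φ) := by
      intro k hk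
      have := Finset.le_sup (f := id) hk
      simp only [id] at this
      omega
    have hp_self : p ∈ insert p (fvF φ) := Finset.mem_insert_self _ _
    have hp_le := Finset.le_sup (f := id) hp_self
    simp only [id] at hp_le
    exact ⟨(insert p (fvF φ)).sup id + 1, (insert p (fvF φ)).sup id + 2,
      fun h => fresh 0 (by simpa using Finset.mem_insert_of_mem h),
      fun h => fresh 1 (by simpa [Nat.add_assoc] using Finset.mem_insert_of_mem h),
      by omega, by omega, by omega⟩
  have hv₀ : Sum.inl p₀ ∉ vocF φ := fun h => hp₀φ ((voc_fvF p₀ φ).mp h)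
  have hv₁ : Sum.inl p₁ ∉ vocF φ := fun h => hp₁φ ((voc_fvF p₁ φ).mp h)
  -- the two sides of the interpolation problem
  set A := Formula.and (substAtom p p₀ φ) (.atom p₀) with hA_def
  set B := Formula.imp (substAtom p p₁ φ) (.atom p₁) with hB_def
  have hAB : valid (A.imp B) := by
    intro W M w
    rw [eval_imp, hA_def, hB_def, eval_imp]
    simp only [evaluate]
    rintro ⟨h1, h2⟩ h3
    exact (hImplicit p₀ p₁ hv₀ hv₁ W M w h1 h3).mp h2
  obtain ⟨θ, hvoc, hAθ, hθB⟩ := hCIP A B hAB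
  -- θ has no p₀, p₁, p
  have hvocθ : vocF θ ⊆ vocF φ \ {Sum.inl p} := by
    intro x hx
    obtain ⟨hxA, hxB⟩ := hvoc hx
    have h1 : x ∈ (vocF φ \ {Sum.inl p}) ∪ {Sum.inl p₀} := by
      simp only [hA_def, vocF, Set.mem_union] at hxA
      rcases hxA with h | h
      · exact voc_substF p p₀ φ (by simpa [substAtom] using h)
      · exact Or.inr (by simpa [vocF] using h)
    have h2 : x ∈ (vocF φ \ {Sum.inl p}) ∪ {Sum.inl p₁} := by
      simp only [hB_def, Formula.imp, vocF, Set.mem_union] at hxB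
      rcases hxB with h | h
      · exact voc_substF p p₁ φ (by simpa [substAtom] using h)
      · exact Or.inr (by simpa [vocF] using h)
    rcases h1 with h1 | h1
    · exact h1
    · rcases h2 with h2 | h2
      · exact h2
      · exfalso
        simp only [Set.mem_singleton_iff] at h1 h2
        rw [h1] at h2
        exact hp₀₁ (Sum.inl.inj h2)
  refine ⟨θ, hvocθ, ?_⟩
  intro W M w hφ
  have hfvθ : ∀ r ∈ fvF θ, r ≠ p₀ ∧ r ≠ p₁ := by
    intro r hr
    have hx : Sum.inl r ∈ vocF φ := (hvocθ ((voc_fvF r θ).mpr hr)).1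
    have hrφ : r ∈ fvF φ := (voc_fvF r φ).mp hx
    exact ⟨fun h => hp₀φ (h ▸ hrφ), fun h => hp₁φ (h ▸ hrφ)⟩
  -- key: substituting a fresh atom q for p and revaluing q as p gives back φ
  have key : ∀ (q : ℕ), q ∉ fvF φ →
      ∀ (M₀ : KripkeModel W), M₀.rel = M.rel → (∀ v, M₀.val v q ↔ M.val v p) →
      (∀ v r, r ≠ q → (M₀.val v r ↔ M.val v r)) →
      (evaluate M₀ w (substAtom p q φ) ↔ evaluate M w φ) := by
    intro q hq M₀ hrel hvq hvother
    rw [substAtom, substF_eval]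
    refine agreeF _ M (by rw [hrel]) φ ?_ w
    intro v r hr
    by_cases hrp : r = p
    · subst hrp
      simp only [if_pos rfl, evaluate]
      exact hvq v
    · simp only [if_neg hrp, evaluate]
      exact hvother v r (fun h => hq (h ▸ hr))
  constructor
  · -- p → θ
    intro hp
    set M₀ : KripkeModel W := ⟨M.rel, fun v r => if r = p₀ then M.val v p else M.val v r⟩ with hM₀
    have h1 : evaluate M₀ w (substAtom p p₀ φ) :=
      (key p₀ hp₀φ M₀ rfl (fun v => by simp [hM₀]) (fun v r hr => by simp [hM₀, hr])).mpr hφ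
    have h2 : evaluate M₀ w A := by
      rw [hA_def]
      simp only [evaluate]
      refine ⟨h1, ?_⟩
      have hp' : M.val w p := by simpa [evaluate] using hp
      simp [hM₀, hp']
    have h3 : evaluate M₀ w θ := (eval_imp M₀ w A θ).mp (hAθ W M₀ w) h2
    exact (agreeF M₀ M rfl θ
      (fun v r hr => by simp [hM₀, (hfvθ r hr).1]) w).mp h3
  · -- θ → p
    intro hθ
    set M₁ : KripkeModel W := ⟨M.rel, fun v r => if r = p₁ then M.val v p else M.val v r⟩ with hM₁
    have h0 : evaluate M₁ w θ := (agreeF M M₁ rfl θ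
      (fun v r hr => by simp [hM₁, (hfvθ r hr).2]) w).mp hθ
    have h1 : evaluate M₁ w B := (eval_imp M₁ w θ B).mp (hθB W M₁ w) h0
    rw [hB_def, eval_imp] at h1
    have h2 : evaluate M₁ w (substAtom p p₁ φ) :=
      (key p₁ hp₁φ M₁ rfl (fun v => by simp [hM₁]) (fun v r hr => by simp [hM₁, hr])).mpr hφ
    have h3 := h1 h2
    simp only [evaluate, hM₁] at h3 ⊢
    simpa using h3
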